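/- Let x be a binary string and let y be obtained from x by deleting a single symbol 0 that constitutes a run of length 1 in x. If this deletion destroys an occurrence of 11011 (the deleted position lies inside an occurrence of 11011 in x) or creates an occurrence of 11011 (some occurrence of 11011 in y spans the deletion junction), and moreover the deletion creates an occurrence of 1111, then the string 110011 is preserved from x to y. -/

import Mathlib

/-- Delete from `x` the symbols at the positions in `S`. -/
def deleteIdxs (x : List Bool) (S : Finset ℕ) : List Bool :=
  ((List.range x.length).filter (fun i => decide (i ∉ S))).map (fun i => x.getD i false)

/-- `w` occurs in `x` at position `i`. -/
def occursAt (w x : List Bool) (i : ℕ) : Prop := w <+: x.drop i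

/-- The number of (possibly overlapping) occurrences of `w` in `x`. -/
def Nw (w x : List Bool) : ℕ :=
  ((Finset.range x.length).filter (fun i => w <+: x.drop i)).card

/-- The position in the shortened string of the junction produced by deleting position `k`. -/
def junction (S : Finset ℕ) (k : ℕ) : ℕ :=
  ((Finset.range k).filter (fun m => m ∉ S)).card

/-- `w` is preserved from `x` to `y`: some set `S` of deleted positions realizing `y`
destroys no occurrence of `w` in `x` and no occurrence of `w` in `y` spans a junction. -/
def Preserved (w x y : List Bool) : Prop :=
  ∃ S : Finset ℕ,
    (∀ k ∈ S, k < x.length) ∧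
    S.card + y.length = x.length ∧
    deleteIdxs x S = y ∧
    (∀ i, occursAt w x i → ∀ k ∈ S, ¬ (i ≤ k ∧ k < i + w.length)) ∧
    (∀ j, occursAt w y j → ∀ k ∈ S, ¬ (j < junction S k ∧ junction S k < j + w.length))

/-- `x` has a (maximal) run of length `ℓ` starting at position `i`. -/
def runAt (x : List Bool) (i ℓ : ℕ) : Prop :=
  0 < ℓ ∧ i + ℓ ≤ x.length ∧
  (∀ j, i ≤ j → j < i + ℓ → x.getD j false = x.getD i false) ∧
  (i = 0 ∨ x.getD (i - 1) false ≠ x.getD i false) ∧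
  (i + ℓ = x.length ∨ x.getD (i + ℓ) false ≠ x.getD i false)

/-- position `k` of `x` lies in a run of length `ℓ`. -/
def inRun (x : List Bool) (k ℓ : ℕ) : Prop := ∃ i, runAt x i ℓ ∧ i ≤ k ∧ k < i + ℓ

def w0000 : List Bool := [false, false, false, false]
def w1111 : List Bool := [true, true, true, true]
def w11011 : List Bool := [true, true, false, true, true]
def w110011 : List Bool := [true, true, false, false, true, true]

/-- The set of strings obtainable from `x` by deleting two symbols. -/
def D2 (x : List Bool) : Set (List Bool) :=
  { y | ∃ i j : ℕ, i < j ∧ j < x.length ∧ y = deleteIdxs x ({i, j} : Finset ℕ) }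

/-- run-length representation of the runs of ones, in order. -/
def tau1 (x : List Bool) : List ℕ :=
  ((x.splitBy (· == ·)).filter (fun r => r.headD false)).map List.length

/-- the subsequence of `tau1` of entries at least 2. -/
def tauGe2 (x : List Bool) : List ℕ := (tau1 x).filter (fun ℓ => decide (2 ≤ ℓ))

/-- sum of the odd-indexed entries. -/
def oddIdxSum (l : List ℕ) : ℕ :=
  ((Finset.range l.length).filter (fun i => i % 2 = 1)).sum (fun i => l.getD i 0)

lemma occursAt_iff (w x : List Bool) (i : ℕ) (hw : 0 < w.length) :
    occursAt w x i ↔ i + w.length ≤ x.length ∧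
      ∀ t, t < w.length → x.getD (i + t) false = w.getD t false := by
  constructor
  · intro h
    have hlen := h.length_le
    rw [List.length_drop] at hlen
    have hle : i + w.length ≤ x.length := by omega
    refine ⟨hle, fun t ht => ?_⟩
    have h1 : i + t < x.length := by omega
    have h2 : t < (x.drop i).length := by rw [List.length_drop]; omega
    rw [List.getD_eq_getElem _ _ h1, List.getD_eq_getElem _ _ ht]
    exact (((h.getElem ht).trans List.getElem_drop).symm)
  · rintro ⟨hle, hval⟩
    rw [occursAt, List.prefix_iff_eq_take]
    apply List.ext_getElem
    · rw [List.length_take, List.length_drop]; omega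
    · intro t h1 h2
      rw [List.getElem_take, List.getElem_drop]
      have := hval t h1
      rw [List.getD_eq_getElem _ _ (show i + t < x.length by omega),
          List.getD_eq_getElem _ _ h1] at this
      exact this.symm

lemma filter_range_singleton (n k : ℕ) (hk : k < n) :
    (List.range n).filter (fun i => decide (i ∉ ({k} : Finset ℕ))) =
      List.range k ++ (List.range (n - (k+1))).map (fun m => k + 1 + m) := by
  have h : n = (k+1) + (n - (k+1)) := by omega
  conv_lhs => rw [h]
  rw [List.range_add, List.filter_append, List.range_succ, List.filter_append]
  have h1 : (List.range k).filter (fun i => decide (i ∉ ({k} : Finset ℕ))) = List.range k := by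
    apply List.filter_eq_self.mpr
    intro a ha
    rw [List.mem_range] at ha
    simp only [decide_eq_true_eq, Finset.mem_singleton]
    omega
  have h2 : ([k] : List ℕ).filter (fun i => decide (i ∉ ({k} : Finset ℕ))) = [] := by simp
  have h3 : ((List.range (n-(k+1))).map (fun m => k + 1 + m)).filter
      (fun i => decide (i ∉ ({k} : Finset ℕ))) = (List.range (n-(k+1))).map (fun m => k+1+m) := by
    apply List.filter_eq_self.mpr
    intro a ha
    simp only [List.mem_map, List.mem_range] at ha
    obtain ⟨m, _, rfl⟩ := ha
    simp only [decide_eq_true_eq, Finset.mem_singleton]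
    omega
  rw [h1, h2, h3]
  simp

lemma deleteIdxs_len (x : List Bool) (k : ℕ) (hk : k < x.length) :
    (deleteIdxs x ({k} : Finset ℕ)).length = x.length - 1 := by
  unfold deleteIdxs
  rw [filter_range_singleton _ _ hk]
  simp
  omega

lemma deleteIdxs_getD_lt (x : List Bool) (k m : ℕ) (hk : k < x.length) (hm : m < k) :
    (deleteIdxs x ({k} : Finset ℕ)).getD m false = x.getD m false := by
  unfold deleteIdxs
  rw [filter_range_singleton _ _ hk, List.map_append]
  rw [List.getD_append _ _ _ _ (by simpa using hm)]
  rw [List.getD_eq_getElem _ _ (by simpa using hm)]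
  simp

lemma deleteIdxs_getD_ge (x : List Bool) (k m : ℕ) (hk : k < x.length) (hm : k ≤ m) :
    (deleteIdxs x ({k} : Finset ℕ)).getD m false = x.getD (m+1) false := by
  by_cases hm2 : m < x.length - 1
  · unfold deleteIdxs
    rw [filter_range_singleton _ _ hk, List.map_append]
    rw [List.getD_eq_getElem _ _ (by simp; omega)]
    rw [List.getElem_append_right (by simp; omega)]
    rw [List.getD_eq_getElem _ _ (by omega)]
    simp only [List.length_map, List.length_range, List.getElem_map, List.getElem_range]
    rw [show k + 1 + (m - k) = m + 1 by omega]
    rw [List.getD_eq_getElem _ _ (by omega)]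
  · rw [List.getD_eq_default _ _ (by rw [deleteIdxs_len x k hk]; omega),
       List.getD_eq_default _ _ (by omega)]

/-- If deleting a `0` that constitutes a run of length 1 creates or destroys a `11011`
and creates a `1111`, then `110011` is preserved. -/
theorem claim_if11011 (x y : List Bool) (k : ℕ) (hk : k < x.length)
    (hval : x.getD k false = false) (hrun : runAt x k 1)
    (hy : y = deleteIdxs x ({k} : Finset ℕ))
    (h11011 : (∃ i, occursAt w11011 x i ∧ i ≤ k ∧ k < i + w11011.length) ∨
      (∃ j, occursAt w11011 y j ∧ j < k ∧ k < j + w11011.length))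
    (h1111created : ∃ j, occursAt w1111 y j ∧ j < k ∧ k < j + w1111.length) :
    Preserved w110011 x y := by
  have hw6 : w110011.length = 6 := rfl
  have hw5 : w11011.length = 5 := rfl
  have hw4 : w1111.length = 4 := rfl
  obtain ⟨-, -, -, hL, hR⟩ := hrun
  have hxm : 0 < k → x.getD (k-1) false = true := by
    intro h0
    rcases hL with h | h
    · omega
    · rw [hval] at h; simpa using h
  have hxp : k + 1 < x.length → x.getD (k+1) false = true := by
    intro h0
    rcases hR with h | h
    · omega
    · rw [hval] at h; simpa using h
  have hylen : y.length = x.length - 1 := by rw [hy]; exact deleteIdxs_len x k hk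
  have hylt : ∀ m, m < k → y.getD m false = x.getD m false := fun m hm => by
    rw [hy]; exact deleteIdxs_getD_lt x k m hk hm
  have hyge : ∀ m, k ≤ m → y.getD m false = x.getD (m+1) false := fun m hm => by
    rw [hy]; exact deleteIdxs_getD_ge x k m hk hm
  have hjunc : junction ({k} : Finset ℕ) k = k := by
    unfold junction
    rw [Finset.filter_true_of_mem, Finset.card_range]
    intro m hm
    rw [Finset.mem_range] at hm
    simp only [Finset.mem_singleton]
    omega
  obtain ⟨j₀, hocc0, hj01, hj02⟩ := h1111created
  rw [hw4] at hj02
  rw [occursAt_iff _ _ _ (by decide)] at hocc0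
  obtain ⟨hjlen0, hv0⟩ := hocc0
  rw [hw4] at hjlen0
  have yone : ∀ m, j₀ ≤ m → m < j₀ + 4 → y.getD m false = true := by
    intro m h1 h2
    have h3 := hv0 (m - j₀) (by rw [hw4]; omega)
    rw [show j₀ + (m - j₀) = m by omega] at h3
    rw [h3]
    have h4 : ∀ t, t < 4 → w1111.getD t false = true := by decide
    exact h4 _ (by omega)
  refine ⟨{k}, ?_, ?_, hy.symm, ?_, ?_⟩
  · intro k' hk'; rw [Finset.mem_singleton] at hk'; omega
  · rw [Finset.card_singleton]; omega
  · -- no destroyed 110011 in x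
    intro i hocc k' hk' hcon
    obtain ⟨h1, h2⟩ := hcon
    rw [Finset.mem_singleton] at hk'
    rw [hk'] at h1 h2
    rw [hw6] at h2
    rw [occursAt_iff _ _ _ (by decide)] at hocc
    obtain ⟨hilen, hv⟩ := hocc
    rw [hw6] at hilen
    have vals : ∀ t, t < 6 → x.getD (i+t) false = w110011.getD t false :=
      fun t ht => hv t (by rw [hw6]; exact ht)
    rcases (by omega : k = i ∨ k = i+1 ∨ k = i+2 ∨ k = i+3 ∨ k = i+4 ∨ k = i+5)
      with hc | hc | hc | hc | hc | hc
    · have h5 := vals 0 (by omega); rw [show i + 0 = k by omega, hval] at h5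
      exact absurd h5 (by decide)
    · have h5 := vals 1 (by omega); rw [show i + 1 = k by omega, hval] at h5
      exact absurd h5 (by decide)
    · have h5 := vals 3 (by omega)
      rw [show i + 3 = k + 1 by omega, hxp (by omega)] at h5
      exact absurd h5 (by decide)
    · have h5 := vals 2 (by omega)
      rw [show i + 2 = k - 1 by omega, hxm (by omega)] at h5
      exact absurd h5 (by decide)
    · have h5 := vals 4 (by omega); rw [show i + 4 = k by omega, hval] at h5
      exact absurd h5 (by decide)
    · have h5 := vals 5 (by omega); rw [show i + 5 = k by omega, hval] at h5
      exact absurd h5 (by decide)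
  · -- no created 110011 spanning the junction in y
    intro j hocc k' hk' hcon
    obtain ⟨hs1, hs2⟩ := hcon
    rw [Finset.mem_singleton] at hk'
    rw [hk'] at hs1 hs2
    rw [hjunc] at hs1 hs2
    rw [hw6] at hs2
    rw [occursAt_iff _ _ _ (by decide)] at hocc
    obtain ⟨hjlen, hv⟩ := hocc
    rw [hw6] at hjlen
    have vals : ∀ t, t < 6 → y.getD (j+t) false = w110011.getD t false :=
      fun t ht => hv t (by rw [hw6]; exact ht)
    have e2 : y.getD (j+2) false = false := (vals 2 (by omega)).trans (by decide)
    have e3 : y.getD (j+3) false = false := (vals 3 (by omega)).trans (by decide)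
    have e4 : y.getD (j+4) false = true := (vals 4 (by omega)).trans (by decide)
    have yk : y.getD k false = true := yone k (by omega) (by omega)
    have ykm : y.getD (k-1) false = true := yone (k-1) (by omega) (by omega)
    rcases (by omega : k = j+1 ∨ k = j+2 ∨ k = j+3 ∨ k = j+4 ∨ k = j+5)
      with hc | hc | hc | hc | hc
    · -- k = j+1
      by_cases hb : k + 1 < j₀ + 4
      · have h5 := yone (k+1) (by omega) hb
        rw [show k + 1 = j + 2 by omega, e2] at h5
        exact absurd h5 (by decide)
      · have hj0 : k = j₀ + 3 := by omega
        have ym1 : y.getD (j₀+2) false = true := yone _ (by omega) (by omega)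
        have ym2 : y.getD (j₀+1) false = true := yone _ (by omega) (by omega)
        have xk2 : x.getD (k+2) false = false := by
          have h' := hyge (k+1) (by omega)
          rw [show k + 1 + 1 = k + 2 by omega] at h'
          rw [show k + 1 = j + 2 by omega, e2] at h'
          exact h'.symm
        rcases h11011 with ⟨i', ho, hi1, hi2⟩ | ⟨j'', ho, hj1, hj2⟩
        · rw [hw5] at hi2
          rw [occursAt_iff _ _ _ (by decide)] at ho
          obtain ⟨hl', hv'⟩ := ho
          rw [hw5] at hl'
          have vals' : ∀ t, t < 5 → x.getD (i'+t) false = w11011.getD t false :=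
            fun t ht => hv' t (by rw [hw5]; exact ht)
          rcases (by omega : k = i' ∨ k = i'+1 ∨ k = i'+2 ∨ k = i'+3 ∨ k = i'+4)
            with h | h | h | h | h
          · have h5 := vals' 0 (by omega); rw [show i' + 0 = k by omega, hval] at h5
            exact absurd h5 (by decide)
          · have h5 := vals' 1 (by omega); rw [show i' + 1 = k by omega, hval] at h5
            exact absurd h5 (by decide)
          · have h5 := vals' 4 (by omega); rw [show i' + 4 = k + 2 by omega, xk2] at h5
            exact absurd h5 (by decide)
          · have h5 := vals' 3 (by omega); rw [show i' + 3 = k by omega, hval] at h5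
            exact absurd h5 (by decide)
          · have h5 := vals' 4 (by omega); rw [show i' + 4 = k by omega, hval] at h5
            exact absurd h5 (by decide)
        · rw [hw5] at hj2
          rw [occursAt_iff _ _ _ (by decide)] at ho
          obtain ⟨hl'', hv''⟩ := ho
          rw [hw5] at hl''
          have vals'' : ∀ t, t < 5 → y.getD (j''+t) false = w11011.getD t false :=
            fun t ht => hv'' t (by rw [hw5]; exact ht)
          rcases (by omega : k = j''+1 ∨ k = j''+2 ∨ k = j''+3 ∨ k = j''+4)
            with h | h | h | h
          · have h5 := vals'' 3 (by omega); rw [show j'' + 3 = j + 3 by omega, e3] at h5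
            exact absurd h5 (by decide)
          · have h5 := vals'' 2 (by omega); rw [show j'' + 2 = k by omega, yk] at h5
            exact absurd h5 (by decide)
          · have h5 := vals'' 2 (by omega); rw [show j'' + 2 = j₀ + 2 by omega, ym1] at h5
            exact absurd h5 (by decide)
          · have h5 := vals'' 2 (by omega); rw [show j'' + 2 = j₀ + 1 by omega, ym2] at h5
            exact absurd h5 (by decide)
    · -- k = j+2
      rw [hc] at yk; rw [yk] at e2; exact absurd e2 (by decide)
    · -- k = j+3
      rw [show k - 1 = j + 2 by omega] at ykm
      rw [ykm] at e2; exact absurd e2 (by decide)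
    · -- k = j+4
      rw [show k - 1 = j + 3 by omega] at ykm
      rw [ykm] at e3; exact absurd e3 (by decide)
    · -- k = j+5
      by_cases hb : j₀ + 2 ≤ k
      · have h5 := yone (k-2) (by omega) (by omega)
        rw [show k - 2 = j + 3 by omega, e3] at h5
        exact absurd h5 (by decide)
      · have hj0 : k = j₀ + 1 := by omega
        have yk1 : y.getD (k+1) false = true := yone _ (by omega) (by omega)
        have xm2 : x.getD (j+3) false = false := (hylt (j+3) (by omega)).symm.trans e3
        rcases h11011 with ⟨i', ho, hi1, hi2⟩ | ⟨j'', ho, hj1, hj2⟩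
        · rw [hw5] at hi2
          rw [occursAt_iff _ _ _ (by decide)] at ho
          obtain ⟨hl', hv'⟩ := ho
          rw [hw5] at hl'
          have vals' : ∀ t, t < 5 → x.getD (i'+t) false = w11011.getD t false :=
            fun t ht => hv' t (by rw [hw5]; exact ht)
          rcases (by omega : k = i' ∨ k = i'+1 ∨ k = i'+2 ∨ k = i'+3 ∨ k = i'+4)
            with h | h | h | h | h
          · have h5 := vals' 0 (by omega); rw [show i' + 0 = k by omega, hval] at h5
            exact absurd h5 (by decide)
          · have h5 := vals' 1 (by omega); rw [show i' + 1 = k by omega, hval] at h5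
            exact absurd h5 (by decide)
          · have h5 := vals' 0 (by omega); rw [show i' + 0 = j + 3 by omega, xm2] at h5
            exact absurd h5 (by decide)
          · have h5 := vals' 3 (by omega); rw [show i' + 3 = k by omega, hval] at h5
            exact absurd h5 (by decide)
          · have h5 := vals' 4 (by omega); rw [show i' + 4 = k by omega, hval] at h5
            exact absurd h5 (by decide)
        · rw [hw5] at hj2
          rw [occursAt_iff _ _ _ (by decide)] at ho
          obtain ⟨hl'', hv''⟩ := ho
          rw [hw5] at hl''
          have vals'' : ∀ t, t < 5 → y.getD (j''+t) false = w11011.getD t false :=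
            fun t ht => hv'' t (by rw [hw5]; exact ht)
          rcases (by omega : k = j''+1 ∨ k = j''+2 ∨ k = j''+3 ∨ k = j''+4)
            with h | h | h | h
          · have h5 := vals'' 2 (by omega); rw [show j'' + 2 = k + 1 by omega, yk1] at h5
            exact absurd h5 (by decide)
          · have h5 := vals'' 2 (by omega); rw [show j'' + 2 = k by omega, yk] at h5
            exact absurd h5 (by decide)
          · have h5 := vals'' 2 (by omega); rw [show j'' + 2 = j + 4 by omega, e4] at h5
            exact absurd h5 (by decide)
          · have h5 := vals'' 1 (by omega); rw [show j'' + 1 = j + 2 by omega, e2] at h5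
            exact absurd h5 (by decide)
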